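/- Assume there is an open interval I ⊆ ℝ containing 0 such that for every α ∈ I, ∫ p q^α (1 + |log p| + |log q|)² dμ < ∞ (in particular Z_α ∈ (0,∞) for α ∈ I). If Cov_{p}[log p, log q] > 0, then there exists a constant a > 0 with [-a, 0) ⊆ I such that for all α ∈ [-a, 0), the entropy of the tilted density satisfies H(p_α) > H(p). -/

import Mathlib

open MeasureTheory Real Filter Topology

private lemma measurable_rpow_c {X : Type*} [MeasurableSpace X] {q : X → ℝ}
    (hq : Measurable q) (t : ℝ) : Measurable fun x => q x ^ t := by
  measurability

private lemma rpow_le_sum_rpow {y t e : ℝ} (hy : 0 < y) (ht : |t| ≤ e) :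
    y ^ t ≤ y ^ (-e) + y ^ e := by
  rcases le_total 1 y with h | h
  · have h1 : y ^ t ≤ y ^ e :=
      Real.rpow_le_rpow_of_exponent_le h (le_trans (le_abs_self t) ht)
    have h2 : (0:ℝ) ≤ y ^ (-e) := Real.rpow_nonneg hy.le _
    linarith
  · have h1 : y ^ t ≤ y ^ (-e) :=
      Real.rpow_le_rpow_of_exponent_ge hy h (by have := (abs_le.mp ht).1; linarith)
    have h2 : (0:ℝ) ≤ y ^ e := Real.rpow_nonneg hy.le _
    linarith

private lemma aux_integrable {X : Type*} [MeasurableSpace X] (μ : Measure X)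
    (p q c : X → ℝ) (hp : Measurable p) (hq : Measurable q) (hc : Measurable c)
    (hp0 : ∀ x, 0 ≤ p x) (hq0 : ∀ x, 0 ≤ q x) (α : ℝ)
    (hM : Integrable (fun x => p x * q x ^ α * (1 + |Real.log (p x)| + |Real.log (q x)|) ^ 2) μ)
    (hb : ∀ x, |c x| ≤ (1 + |Real.log (p x)| + |Real.log (q x)|) ^ 2) :
    Integrable (fun x => p x * q x ^ α * c x) μ := by
  refine hM.mono ((hp.mul (measurable_rpow_c hq α)).mul hc).aestronglyMeasurable
    (ae_of_all _ fun x => ?_)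
  have h1 : 0 ≤ p x * q x ^ α := mul_nonneg (hp0 x) (Real.rpow_nonneg (hq0 x) α)
  have h2 : 0 ≤ (1 + |Real.log (p x)| + |Real.log (q x)|) ^ 2 := sq_nonneg _
  simp only [Real.norm_eq_abs, abs_mul, abs_of_nonneg h1, abs_of_nonneg h2]
  exact mul_le_mul_of_nonneg_left (hb x) h1

private lemma aux_hasDerivAt {X : Type*} [MeasurableSpace X] (μ : Measure X)
    (p q c : X → ℝ)
    (hp : Measurable p) (hq : Measurable q) (hc : Measurable c)
    (hp0 : ∀ x, 0 ≤ p x) (hq0 : ∀ x, 0 ≤ q x)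
    (habs : ∀ᵐ x ∂μ, q x = 0 → p x = 0)
    (e : ℝ) (he : 0 < e)
    (hMm : Integrable (fun x => p x * q x ^ (-e) * (1 + |Real.log (p x)| + |Real.log (q x)|) ^ 2) μ)
    (hMp : Integrable (fun x => p x * q x ^ e * (1 + |Real.log (p x)| + |Real.log (q x)|) ^ 2) μ)
    (hM0 : Integrable (fun x => p x * q x ^ (0:ℝ) * (1 + |Real.log (p x)| + |Real.log (q x)|) ^ 2) μ)
    (hb1 : ∀ x, |c x| ≤ (1 + |Real.log (p x)| + |Real.log (q x)|) ^ 2)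
    (hb2 : ∀ x, |Real.log (q x) * c x| ≤ (1 + |Real.log (p x)| + |Real.log (q x)|) ^ 2) :
    HasDerivAt (fun t : ℝ => ∫ x, p x * q x ^ t * c x ∂μ)
      (∫ x, p x * q x ^ (0:ℝ) * (Real.log (q x) * c x) ∂μ) 0 := by
  have key := hasDerivAt_integral_of_dominated_loc_of_deriv_le (μ := μ) (x₀ := (0:ℝ))
    (F := fun t x => p x * q x ^ t * c x)
    (F' := fun t x => p x * q x ^ t * (Real.log (q x) * c x))
    (bound := fun x =>
      p x * q x ^ (-e) * (1 + |Real.log (p x)| + |Real.log (q x)|) ^ 2 +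
      p x * q x ^ e * (1 + |Real.log (p x)| + |Real.log (q x)|) ^ 2)
    (Metric.ball_mem_nhds 0 he)
    (Eventually.of_forall fun t =>
      ((hp.mul (measurable_rpow_c hq t)).mul hc).aestronglyMeasurable)
    (aux_integrable μ p q c hp hq hc hp0 hq0 0 hM0 hb1)
    (((hp.mul (measurable_rpow_c hq 0)).mul (hq.log.mul hc)).aestronglyMeasurable)
    ?_ (hMm.add hMp) ?_
  · exact key.2
  · -- bound
    filter_upwards [habs] with x hx
    intro t ht
    rw [Metric.mem_ball, Real.dist_eq, sub_zero] at ht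
    rcases eq_or_lt_of_le (hq0 x) with hqx | hqx
    · have hpx : p x = 0 := hx hqx.symm
      simp [hpx]
    · have hqt : q x ^ t ≤ q x ^ (-e) + q x ^ e := rpow_le_sum_rpow hqx ht.le
      have hS : (0:ℝ) ≤ (1 + |Real.log (p x)| + |Real.log (q x)|) ^ 2 := sq_nonneg _
      have h1 : 0 ≤ p x * q x ^ t := mul_nonneg (hp0 x) (Real.rpow_nonneg (hq0 x) t)
      rw [Real.norm_eq_abs, abs_mul, abs_of_nonneg h1]
      calc p x * q x ^ t * |Real.log (q x) * c x|
          ≤ p x * q x ^ t * (1 + |Real.log (p x)| + |Real.log (q x)|) ^ 2 :=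
            mul_le_mul_of_nonneg_left (hb2 x) h1
        _ ≤ p x * (q x ^ (-e) + q x ^ e) * (1 + |Real.log (p x)| + |Real.log (q x)|) ^ 2 := by
            have := mul_le_mul_of_nonneg_left hqt (hp0 x)
            exact mul_le_mul_of_nonneg_right this hS
        _ = p x * q x ^ (-e) * (1 + |Real.log (p x)| + |Real.log (q x)|) ^ 2 +
            p x * q x ^ e * (1 + |Real.log (p x)| + |Real.log (q x)|) ^ 2 := by ring
  · -- differentiability
    filter_upwards [habs] with x hx
    intro t _
    rcases eq_or_lt_of_le (hq0 x) with hqx | hqx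
    · have hpx : p x = 0 := hx hqx.symm
      have hfun : (fun s : ℝ => p x * q x ^ s * c x) = fun _ => (0:ℝ) := by
        funext s; rw [hpx]; ring
      rw [hfun, hpx]
      simpa using hasDerivAt_const t (0:ℝ)
    · have h := (Real.hasStrictDerivAt_const_rpow hqx t).hasDerivAt
      have h2 := (h.const_mul (p x)).mul_const (c x)
      refine h2.congr_deriv ?_
      ring

theorem skewed_entropy_increase
    {X : Type*} [MeasurableSpace X] (μ : Measure X) [SigmaFinite μ]
    (p q : X → ℝ)
    (hpmeas : Measurable p) (hp0 : ∀ x, 0 ≤ p x) (hp1 : ∫ x, p x ∂μ = 1)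
    (hqmeas : Measurable q) (hq0 : ∀ x, 0 ≤ q x) (hq1 : ∫ x, q x ∂μ = 1)
    (habs : ∀ᵐ x ∂μ, q x = 0 → p x = 0)
    (Z : ℝ → ℝ) (hZ : Z = fun α => ∫ x, p x * q x ^ α ∂μ)
    (pα : ℝ → X → ℝ) (hpα : pα = fun α x => p x * q x ^ α / Z α)
    (I : Set ℝ) (hIopen : IsOpen I) (hI0 : (0 : ℝ) ∈ I)
    (hint : ∀ α ∈ I, Integrable
      (fun x => p x * q x ^ α * (1 + |Real.log (p x)| + |Real.log (q x)|) ^ 2) μ)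
    (hZpos : ∀ α ∈ I, 0 < Z α)
    (H : (X → ℝ) → ℝ)
    (hH : H = fun r => -∫ x, r x * Real.log (r x) ∂μ)
    (hCov : 0 < (∫ x, p x * (Real.log (p x) * Real.log (q x)) ∂μ) -
      (∫ x, p x * Real.log (p x) ∂μ) * (∫ x, p x * Real.log (q x) ∂μ)) :
    ∃ a > (0 : ℝ), Set.Ico (-a) 0 ⊆ I ∧
      ∀ α ∈ Set.Ico (-a) (0 : ℝ), H p < H (pα α) := by
  classical
  -- find a symmetric closed interval inside I
  obtain ⟨ε₀, hε₀, hball⟩ := Metric.isOpen_iff.mp hIopen 0 hI0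
  set e : ℝ := ε₀ / 2 with he_def
  have he : 0 < e := by positivity
  have hmem : ∀ t : ℝ, |t| ≤ e → t ∈ I := by
    intro t ht
    apply hball
    rw [Metric.mem_ball, Real.dist_eq, sub_zero]
    linarith
  have hMm := hint (-e) (hmem _ (by rw [abs_neg, abs_of_pos he]))
  have hMp := hint e (hmem _ (by rw [abs_of_pos he]))
  have hM0 := hint 0 hI0
  -- bound facts
  have hbone : ∀ x : X, |(1:ℝ)| ≤ (1 + |Real.log (p x)| + |Real.log (q x)|) ^ 2 := by
    intro x
    have ha := abs_nonneg (Real.log (p x)); have hb := abs_nonneg (Real.log (q x))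
    rw [abs_one]; nlinarith
  have hblogp : ∀ x : X, |Real.log (p x)| ≤ (1 + |Real.log (p x)| + |Real.log (q x)|) ^ 2 := by
    intro x
    have ha := abs_nonneg (Real.log (p x)); have hb := abs_nonneg (Real.log (q x))
    nlinarith
  have hblogq : ∀ x : X, |Real.log (q x)| ≤ (1 + |Real.log (p x)| + |Real.log (q x)|) ^ 2 := by
    intro x
    have ha := abs_nonneg (Real.log (p x)); have hb := abs_nonneg (Real.log (q x))
    nlinarith
  have hbqp : ∀ x : X, |Real.log (q x) * Real.log (p x)| ≤
      (1 + |Real.log (p x)| + |Real.log (q x)|) ^ 2 := by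
    intro x
    have ha := abs_nonneg (Real.log (p x)); have hb := abs_nonneg (Real.log (q x))
    rw [abs_mul]; nlinarith
  have hbqq : ∀ x : X, |Real.log (q x) * Real.log (q x)| ≤
      (1 + |Real.log (p x)| + |Real.log (q x)|) ^ 2 := by
    intro x
    have ha := abs_nonneg (Real.log (p x)); have hb := abs_nonneg (Real.log (q x))
    rw [abs_mul]; nlinarith
  -- abbreviations for the three key integrals
  set B0 : ℝ := ∫ x, p x * Real.log (p x) ∂μ with hB0
  set C0 : ℝ := ∫ x, p x * Real.log (q x) ∂μ with hC0
  set D0 : ℝ := ∫ x, p x * (Real.log (p x) * Real.log (q x)) ∂μ with hD0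
  -- derivative of Z at 0
  have hA : HasDerivAt Z C0 0 := by
    have h := aux_hasDerivAt μ p q (fun _ => 1) hpmeas hqmeas measurable_const hp0 hq0 habs
      e he hMm hMp hM0 hbone (fun x => by simpa using hblogq x)
    have hfun : (fun t : ℝ => ∫ x, p x * q x ^ t * 1 ∂μ) = Z := by
      rw [hZ]; funext t; simp
    have hval : (∫ x, p x * q x ^ (0:ℝ) * (Real.log (q x) * 1) ∂μ) = C0 := by
      rw [hC0]; congr 1; funext x; rw [Real.rpow_zero]; ring
    rw [hfun, hval] at h; exact h
  -- derivative of B at 0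
  have hB : HasDerivAt (fun t : ℝ => ∫ x, p x * q x ^ t * Real.log (p x) ∂μ) D0 0 := by
    have h := aux_hasDerivAt μ p q (fun x => Real.log (p x)) hpmeas hqmeas hpmeas.log
      hp0 hq0 habs e he hMm hMp hM0 hblogp hbqp
    have hval : (∫ x, p x * q x ^ (0:ℝ) * (Real.log (q x) * Real.log (p x)) ∂μ) = D0 := by
      rw [hD0]; congr 1; funext x; rw [Real.rpow_zero]; ring
    rw [hval] at h; exact h
  -- derivative of C at 0
  obtain ⟨E0, hC⟩ : ∃ E0, HasDerivAt (fun t : ℝ => ∫ x, p x * q x ^ t * Real.log (q x) ∂μ) E0 0 :=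
    ⟨_, aux_hasDerivAt μ p q (fun x => Real.log (q x)) hpmeas hqmeas hqmeas.log
      hp0 hq0 habs e he hMm hMp hM0 hblogq hbqq⟩
  -- Z 0 = 1 and values at 0
  have hZ0 : Z 0 = 1 := by
    rw [hZ]; simp only [Real.rpow_zero, mul_one]; exact hp1
  have hBf0 : (∫ x, p x * q x ^ (0:ℝ) * Real.log (p x) ∂μ) = B0 := by
    rw [hB0]; congr 1; funext x; rw [Real.rpow_zero]; ring
  have hCf0 : (∫ x, p x * q x ^ (0:ℝ) * Real.log (q x) ∂μ) = C0 := by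
    rw [hC0]; congr 1; funext x; rw [Real.rpow_zero]; ring
  -- the auxiliary function g
  set g : ℝ → ℝ := fun α => Real.log (Z α) -
    ((∫ x, p x * q x ^ α * Real.log (p x) ∂μ) +
      α * (∫ x, p x * q x ^ α * Real.log (q x) ∂μ)) / Z α with hg_def
  have hZ0ne : Z 0 ≠ 0 := by rw [hZ0]; norm_num
  -- derivative of g at 0
  have hgderiv : HasDerivAt g (B0 * C0 - D0) 0 := by
    have hlog : HasDerivAt (fun α => Real.log (Z α)) (C0 / Z 0) 0 := hA.log hZ0ne
    have hnum : HasDerivAt (fun α => (∫ x, p x * q x ^ α * Real.log (p x) ∂μ) +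
        α * (∫ x, p x * q x ^ α * Real.log (q x) ∂μ))
        (D0 + (1 * (∫ x, p x * q x ^ (0:ℝ) * Real.log (q x) ∂μ) + 0 * E0)) 0 :=
      hB.add ((hasDerivAt_id 0).mul hC)
    have hdiv := hnum.div hA hZ0ne
    have := hlog.sub hdiv
    refine this.congr_deriv ?_
    rw [hZ0, hBf0, hCf0]
    field_simp
    ring
  -- identity : H (pα α) = g α on I
  have hident : ∀ α ∈ I, H (pα α) = g α := by
    intro α hα
    have hZα : 0 < Z α := hZpos α hα
    have hf1 : Integrable (fun x => p x * q x ^ α * 1) μ :=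
      aux_integrable μ p q _ hpmeas hqmeas measurable_const hp0 hq0 α (hint α hα) hbone
    have hf2 : Integrable (fun x => p x * q x ^ α * Real.log (p x)) μ :=
      aux_integrable μ p q _ hpmeas hqmeas hpmeas.log hp0 hq0 α (hint α hα) hblogp
    have hf3 : Integrable (fun x => p x * q x ^ α * Real.log (q x)) μ :=
      aux_integrable μ p q _ hpmeas hqmeas hqmeas.log hp0 hq0 α (hint α hα) hblogq
    have key : ∀ᵐ x ∂μ, (p x * q x ^ α / Z α) * Real.log (p x * q x ^ α / Z α) =
        (p x * q x ^ α * Real.log (p x) + α * (p x * q x ^ α * Real.log (q x)) -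
          Real.log (Z α) * (p x * q x ^ α * 1)) / Z α := by
      filter_upwards [habs] with x hx
      rcases eq_or_lt_of_le (hp0 x) with hpx | hpx
      · rw [← hpx]; simp
      · have hqx : 0 < q x := by
          rcases eq_or_lt_of_le (hq0 x) with h | h
          · exact absurd (hx h.symm) (ne_of_gt hpx)
          · exact h
        have hpq : 0 < p x * q x ^ α := mul_pos hpx (Real.rpow_pos_of_pos hqx α)
        rw [Real.log_div hpq.ne' hZα.ne',
          Real.log_mul hpx.ne' (Real.rpow_pos_of_pos hqx α).ne', Real.log_rpow hqx]
        field_simp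
    have hintegral : (∫ x, (p x * q x ^ α / Z α) * Real.log (p x * q x ^ α / Z α) ∂μ) =
        ((∫ x, p x * q x ^ α * Real.log (p x) ∂μ) +
          α * (∫ x, p x * q x ^ α * Real.log (q x) ∂μ) -
          Real.log (Z α) * Z α) / Z α := by
      rw [integral_congr_ae key]
      rw [integral_div]
      congr 1
      have e1 : (∫ x, (p x * q x ^ α * Real.log (p x) +
            α * (p x * q x ^ α * Real.log (q x)) -
            Real.log (Z α) * (p x * q x ^ α * 1)) ∂μ) =
          (∫ x, (p x * q x ^ α * Real.log (p x) +
            α * (p x * q x ^ α * Real.log (q x))) ∂μ) -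
          ∫ x, Real.log (Z α) * (p x * q x ^ α * 1) ∂μ :=
        integral_sub (hf2.add (hf3.const_mul α)) (hf1.const_mul _)
      have e2 : (∫ x, (p x * q x ^ α * Real.log (p x) +
            α * (p x * q x ^ α * Real.log (q x))) ∂μ) =
          (∫ x, p x * q x ^ α * Real.log (p x) ∂μ) +
          ∫ x, α * (p x * q x ^ α * Real.log (q x)) ∂μ :=
        integral_add hf2 (hf3.const_mul α)
      have e3 : (∫ x, α * (p x * q x ^ α * Real.log (q x)) ∂μ) =
          α * ∫ x, p x * q x ^ α * Real.log (q x) ∂μ := integral_const_mul _ _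
      have e4 : (∫ x, Real.log (Z α) * (p x * q x ^ α * 1) ∂μ) =
          Real.log (Z α) * ∫ x, p x * q x ^ α * 1 ∂μ := integral_const_mul _ _
      have e5 : (∫ x, p x * q x ^ α * 1 ∂μ) = Z α := by
        rw [hZ]; simp
      rw [e1, e2, e3, e4, e5]
    rw [hH, hpα, hg_def]
    simp only
    rw [hintegral]
    field_simp
    ring
  -- g 0 = H p
  have hg0 : g 0 = H p := by
    rw [hg_def, hH]
    simp only
    rw [hZ0, hBf0, hCf0, Real.log_one]
    ring
  -- derivative negative
  have hL : B0 * C0 - D0 < 0 := by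
    rw [hB0, hC0, hD0]; linarith [hCov]
  -- slope is eventually negative
  have hslope := hasDerivAt_iff_tendsto_slope.mp hgderiv
  have hev : ∀ᶠ α in 𝓝[≠] (0:ℝ), slope g 0 α < 0 :=
    hslope.eventually (Iio_mem_nhds hL)
  rw [eventually_nhdsWithin_iff, Metric.eventually_nhds_iff] at hev
  obtain ⟨δ, hδ, hδev⟩ := hev
  refine ⟨min (δ / 2) e, by positivity, ?_, ?_⟩
  · intro α hα
    obtain ⟨h1, h2⟩ := hα
    apply hmem
    rw [abs_of_neg h2]
    have : min (δ / 2) e ≤ e := min_le_right _ _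
    linarith
  · intro α hα
    obtain ⟨h1, h2⟩ := hα
    have hαne : α ≠ 0 := ne_of_lt h2
    have hαI : α ∈ I := by
      apply hmem
      rw [abs_of_neg h2]
      have : min (δ / 2) e ≤ e := min_le_right _ _
      linarith
    have hdist : dist α 0 < δ := by
      rw [Real.dist_eq, sub_zero, abs_of_neg h2]
      have : min (δ / 2) e ≤ δ / 2 := min_le_left _ _
      linarith
    have hs := hδev hdist (Set.mem_compl_singleton_iff.mpr hαne)
    rw [slope_def_field] at hs
    have hs' : (g α - g 0) / (α - 0) < 0 := hs
    rw [sub_zero] at hs'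
    have hpos : 0 < g α - g 0 := by
      rcases div_neg_iff.mp hs' with ⟨ha, hb⟩ | ⟨ha, hb⟩
      · linarith
      · linarith
    rw [← hg0, hident α hαI]
    linarith
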